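/- arXiv:1710.00781 — 7 statements merged into one kernel-verified Lean document; each statement's English description precedes it below -/
import Mathlib

section
/- If T : ℝ_+^K → ℝ_{++} is a standard interference function (monotone and scalable), then for every x in ℝ_+^K the limit lim_{h→∞} T(h·x)/h exists in ℝ_+ (i.e., the asymptotic function T_∞ is well-defined and finite on the nonnegative orthant). -/
open Filter

/-- For a standard interference function `T` (positive, monotone,
scalable on the nonnegative orthant), for every `x ≥ 0` the limit
`lim_{h→∞} T(h•x)/h` exists in `ℝ₊`. -/
theorem sif_asymptotic_limit_exists
    {K : ℕ} (T : (Fin K → ℝ) → ℝ)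
    (hpos : ∀ x : Fin K → ℝ, (∀ i, 0 ≤ x i) → 0 < T x)
    (hmono : ∀ x y : Fin K → ℝ, (∀ i, 0 ≤ x i) → (∀ i, x i ≤ y i) → T x ≤ T y)
    (hscal : ∀ x : Fin K → ℝ, (∀ i, 0 ≤ x i) → ∀ α : ℝ, 1 < α → T (α • x) < α * T x)
    (x : Fin K → ℝ) (hx : ∀ i, 0 ≤ x i) :
    ∃ L : ℝ, 0 ≤ L ∧ Tendsto (fun h : ℝ => T (h • x) / h) atTop (nhds L) := by
  have key : ∀ a b : ℝ, 0 < a → a ≤ b → T (b • x) / b ≤ T (a • x) / a := by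
    intro a b ha hab
    rcases eq_or_lt_of_le hab with rfl | h
    · exact le_refl _
    · have hα : 1 < b / a := (one_lt_div ha).2 h
      have hax : ∀ i, 0 ≤ (a • x) i := fun i => mul_nonneg ha.le (hx i)
      have hs := hscal (a • x) hax (b / a) hα
      rw [smul_smul, div_mul_cancel₀ _ ha.ne'] at hs
      rw [div_mul_eq_mul_div, lt_div_iff₀ ha] at hs
      rw [div_le_div_iff₀ (ha.trans h) ha]
      linarith
  set f : ℝ → ℝ := fun h => T ((max h 1) • x) / (max h 1) with hf
  have anti : Antitone f := by
    intro a b hab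
    exact key (max a 1) (max b 1) (lt_of_lt_of_le one_pos (le_max_right a 1))
      (max_le_max hab le_rfl)
  have fnn : ∀ h, 0 ≤ f h := by
    intro h
    have h1 : (0:ℝ) < max h 1 := lt_of_lt_of_le one_pos (le_max_right h 1)
    exact div_nonneg (hpos _ (fun i => mul_nonneg h1.le (hx i))).le h1.le
  have hbdd : BddBelow (Set.range f) := ⟨0, by rintro _ ⟨h, rfl⟩; exact fnn h⟩
  refine ⟨⨅ h, f h, le_ciInf fnn, ?_⟩
  have htend : Tendsto f atTop (nhds (⨅ h, f h)) := tendsto_atTop_ciInf anti hbdd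
  refine htend.congr' ?_
  filter_upwards [eventually_ge_atTop (1:ℝ)] with h hh
  simp [hf, max_eq_left hh]
end

section
/- Fix positive reals r̄_k, p_k, W̄, a nonnegative matrix Ṽ ∈ ℝ_+^{K×K}, and σ̃ ∈ ℝ_{++}^K. Then each coordinate map T^{(k)}(w) = r̄_k / (W̄ · log₂(1 + p_k / [Ṽ diag(p) w + σ̃]_k)) defined on ℝ_+^K is a standard interference function: it is positive, monotone in w, and scalable (α > 1 implies α·T^{(k)}(w) > T^{(k)}(α·w)). -/
open Filter

/-- The rate-demand interference map
`T^(k)(w) = r̄_k / (W̄ · log₂(1 + p_k / ([Ṽ diag(p) w]_k + σ̃_k)))`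
is a standard interference function: positive, monotone and scalable on `ℝ₊^K`. -/
theorem rate_interference_map_is_SIF
    {K : ℕ} (r : Fin K → ℝ) (p : Fin K → ℝ) (W : ℝ)
    (V : Matrix (Fin K) (Fin K) ℝ) (σ : Fin K → ℝ)
    (hr : ∀ k, 0 < r k) (hp : ∀ k, 0 < p k) (hW : 0 < W)
    (hV : ∀ i j, 0 ≤ V i j) (hσ : ∀ k, 0 < σ k) (k : Fin K) :
    let T : (Fin K → ℝ) → ℝ := fun w =>
      r k / (W * Real.logb 2 (1 + p k / (V.mulVec (fun i => p i * w i) k + σ k)))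
    (∀ w : Fin K → ℝ, (∀ i, 0 ≤ w i) → 0 < T w)
    ∧ (∀ w w' : Fin K → ℝ, (∀ i, 0 ≤ w i) → (∀ i, w i ≤ w' i) → T w ≤ T w')
    ∧ (∀ w : Fin K → ℝ, (∀ i, 0 ≤ w i) → ∀ α : ℝ, 1 < α → T (α • w) < α * T w) := by
  intro T
  have h2 : (1 : ℝ) < 2 := one_lt_two
  set m : (Fin K → ℝ) → ℝ := fun w => V.mulVec (fun i => p i * w i) k with hm_def
  have hm_nonneg : ∀ w : Fin K → ℝ, (∀ i, 0 ≤ w i) → 0 ≤ m w := by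
    intro w hw
    simp only [hm_def, Matrix.mulVec, dotProduct]
    apply Finset.sum_nonneg
    intro i _
    exact mul_nonneg (hV k i) (mul_nonneg (hp i).le (hw i))
  have hI_pos : ∀ w : Fin K → ℝ, (∀ i, 0 ≤ w i) → 0 < m w + σ k := fun w hw =>
    add_pos_of_nonneg_of_pos (hm_nonneg w hw) (hσ k)
  have hL_pos : ∀ w : Fin K → ℝ, (∀ i, 0 ≤ w i) →
      0 < Real.logb 2 (1 + p k / (m w + σ k)) := by
    intro w hw
    apply Real.logb_pos h2
    have := div_pos (hp k) (hI_pos w hw)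
    linarith
  have hm_mono : ∀ w w' : Fin K → ℝ, (∀ i, 0 ≤ w i) → (∀ i, w i ≤ w' i) → m w ≤ m w' := by
    intro w w' hw hww
    simp only [hm_def, Matrix.mulVec, dotProduct]
    apply Finset.sum_le_sum
    intro i _
    exact mul_le_mul_of_nonneg_left
      (mul_le_mul_of_nonneg_left (hww i) (hp i).le) (hV k i)
  refine ⟨?_, ?_, ?_⟩
  · intro w hw
    exact div_pos (hr k) (mul_pos hW (hL_pos w hw))
  · intro w w' hw hww
    have hw' : ∀ i, 0 ≤ w' i := fun i => (hw i).trans (hww i)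
    have hLle : Real.logb 2 (1 + p k / (m w' + σ k)) ≤
        Real.logb 2 (1 + p k / (m w + σ k)) := by
      apply Real.logb_le_logb_of_le h2
      · have := div_pos (hp k) (hI_pos w' hw')
        linarith
      · have : p k / (m w' + σ k) ≤ p k / (m w + σ k) :=
          div_le_div_of_nonneg_left (hp k).le (hI_pos w hw) (add_le_add_left (hm_mono w w' hw hww) _)
        linarith
    exact div_le_div_of_nonneg_left (hr k).le (mul_pos hW (hL_pos w' hw'))
      (mul_le_mul_of_nonneg_left hLle hW.le)
  · intro w hw α hα
    have hmα : m (α • w) = α * m w := by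
      simp only [hm_def, Matrix.mulVec, dotProduct, Pi.smul_apply, smul_eq_mul,
        Finset.mul_sum]
      apply Finset.sum_congr rfl
      intro i _
      ring
    set s : ℝ := m w + σ k with hs_def
    set t : ℝ := α * m w + σ k with ht_def
    have hs : 0 < s := hI_pos w hw
    have ht : 0 < t := by
      have h1 := hm_nonneg w hw
      have h2' : 0 ≤ α * m w := mul_nonneg (by linarith) h1
      simp only [ht_def]; linarith [hσ k]
    have key : Real.logb 2 (1 + p k / s) < α * Real.logb 2 (1 + p k / t) := by
      have hx : 0 < p k / t := div_pos (hp k) ht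
      have hBern : 1 + α * (p k / t) ≤ (1 + p k / t) ^ α :=
        one_add_mul_self_le_rpow_one_add (by linarith) hα.le
      have hstep : 1 + p k / s < 1 + α * (p k / t) := by
        have h1 : p k / s < α * (p k / t) := by
          have he : α * (p k / t) = α * p k / t := by ring
          rw [he, div_lt_div_iff₀ hs ht]
          have hmw := hm_nonneg w hw
          have hσk := hσ k
          simp only [hs_def, ht_def]
          nlinarith [hp k, mul_pos (hp k) (hσ k)]
        linarith
      have hlt : 1 + p k / s < (1 + p k / t) ^ α := lt_of_lt_of_le hstep hBern
      calc Real.logb 2 (1 + p k / s)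
          < Real.logb 2 ((1 + p k / t) ^ α) :=
            Real.logb_lt_logb h2 (by linarith [div_pos (hp k) hs]) hlt
        _ = α * Real.logb 2 (1 + p k / t) :=
            Real.logb_rpow_eq_mul_logb_of_pos (by linarith)
    have hLα : 0 < Real.logb 2 (1 + p k / t) := by
      apply Real.logb_pos h2; linarith [div_pos (hp k) ht]
    have hL : 0 < Real.logb 2 (1 + p k / s) := hL_pos w hw
    show r k / (W * Real.logb 2 (1 + p k / (m (α • w) + σ k))) <
      α * (r k / (W * Real.logb 2 (1 + p k / s)))
    rw [hmα, ← ht_def]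
    rw [div_lt_iff₀ (mul_pos hW hLα), mul_comm α _, mul_assoc, div_mul_eq_mul_div,
      lt_div_iff₀ (mul_pos hW hL)]
    have hrW : 0 < r k * W := mul_pos (hr k) hW
    nlinarith [mul_lt_mul_of_pos_left key hrW]
end

section
/- With T^{(k)}(w) = r̄_k / (W̄ · log₂(1 + p_k / [Ṽ diag(p) w + σ̃]_k)), the asymptotic function is T^{(k)}_∞(w) = lim_{h→∞} T^{(k)}(h·w)/h = (ln 2 · r̄_k / (W̄ · p_k)) · [Ṽ diag(p) w]_k for every w ∈ ℝ_+^K with [Ṽ diag(p) w]_k > 0. In matrix form, T_∞(w) = diag(p)^{-1} Φ Ṽ diag(p) w where Φ = (ln 2 / W̄) · diag(r̄_1,…,r̄_K). -/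
open Filter

/-- The asymptotic function associated with
`T^(k)(w) = r̄_k / (W̄ · log₂(1 + p_k / ([Ṽ diag(p) w]_k + σ̃_k)))` is the linear map
`T^(k)_∞(w) = (ln 2 · r̄_k / (W̄ · p_k)) · [Ṽ diag(p) w]_k`, i.e. in matrix form
`T_∞(w) = diag(p)⁻¹ Φ Ṽ diag(p) w` with `Φ = (ln 2 / W̄) diag(r̄)`. -/
theorem rate_interference_asymptotic_map
    {K : ℕ} (r : Fin K → ℝ) (p : Fin K → ℝ) (W : ℝ)
    (V : Matrix (Fin K) (Fin K) ℝ) (σ : Fin K → ℝ)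
    (hr : ∀ k, 0 < r k) (hp : ∀ k, 0 < p k) (hW : 0 < W)
    (hV : ∀ i j, 0 ≤ V i j) (hσ : ∀ k, 0 < σ k) :
    (∀ k : Fin K, ∀ w : Fin K → ℝ, (∀ i, 0 ≤ w i) →
        0 < V.mulVec (fun i => p i * w i) k →
        Tendsto
          (fun h : ℝ =>
            (r k / (W * Real.logb 2
              (1 + p k / (V.mulVec (fun i => p i * (h • w) i) k + σ k)))) / h)
          atTop
          (nhds (Real.log 2 * r k / (W * p k) * V.mulVec (fun i => p i * w i) k)))
    ∧ (∀ w : Fin K → ℝ,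
        (fun k => Real.log 2 * r k / (W * p k) * V.mulVec (fun i => p i * w i) k)
          = ((Matrix.diagonal p)⁻¹ * (Matrix.diagonal fun k => Real.log 2 / W * r k)
              * V * Matrix.diagonal p).mulVec w) := by
  constructor
  · intro k w hw ha
    set a := V.mulVec (fun i => p i * w i) k with ha_def
    have ha' : a ≠ 0 := ne_of_gt ha
    have hlog2 : (0:ℝ) < Real.log 2 := Real.log_pos (by norm_num)
    have hrw : ∀ h : ℝ, V.mulVec (fun i => p i * (h • w) i) k = h * a := by
      intro h
      have hv : (fun i => p i * (h • w) i) = h • (fun i => p i * w i) := by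
        funext i; simp [smul_eq_mul]; ring
      rw [hv, Matrix.mulVec_smul]; simp [ha_def]
    have htop : Tendsto (fun h : ℝ => h * a + σ k) atTop atTop :=
      tendsto_atTop_add_const_right _ _ (Tendsto.atTop_mul_const ha tendsto_id)
    have h1 : Tendsto (fun h : ℝ => (h * a + σ k) *
        Real.log (1 + p k / (h * a + σ k))) atTop (nhds (p k)) :=
      (Real.tendsto_mul_log_one_add_div_atTop (p k)).comp htop
    have hL0 : Tendsto (fun h : ℝ => Real.log (1 + p k / (h * a + σ k))) atTop (nhds 0) := by
      have h2 : Tendsto (fun h : ℝ => 1 + p k / (h * a + σ k)) atTop (nhds 1) := by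
        simpa using tendsto_const_nhds.add (Tendsto.div_atTop (tendsto_const_nhds (x := p k)) htop)
      simpa [Function.comp_def] using ((Real.continuousAt_log one_ne_zero).tendsto.comp h2)
    have hg : Tendsto (fun h : ℝ => h * Real.log (1 + p k / (h * a + σ k))) atTop
        (nhds (p k / a)) := by
      have h3 := (h1.div_const a).sub (hL0.const_mul (σ k / a))
      simp only [mul_zero, sub_zero] at h3
      refine Tendsto.congr (f₁ := fun h : ℝ => (h * a + σ k) *
          Real.log (1 + p k / (h * a + σ k)) / a
          - σ k / a * Real.log (1 + p k / (h * a + σ k))) (fun h => by field_simp; ring) h3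
    have hfin : Tendsto (fun h : ℝ => r k * Real.log 2 /
        (W * (h * Real.log (1 + p k / (h * a + σ k))))) atTop
        (nhds (r k * Real.log 2 / (W * (p k / a)))) := by
      refine tendsto_const_nhds.div (tendsto_const_nhds.mul hg) ?_
      have := hp k
      positivity
    have hval : r k * Real.log 2 / (W * (p k / a)) = Real.log 2 * r k / (W * p k) * a := by
      have := hp k
      field_simp
    rw [hval] at hfin
    refine hfin.congr' ?_
    filter_upwards [eventually_gt_atTop (0:ℝ)] with h hh
    have hden : 0 < h * a + σ k := by have := hσ k; positivity
    have hx : 0 < p k / (h * a + σ k) := div_pos (hp k) hden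
    have hL : 0 < Real.log (1 + p k / (h * a + σ k)) :=
      Real.log_pos (by linarith)
    rw [hrw, Real.logb, ]
    field_simp
  · intro w
    funext k
    have hpd : (Matrix.diagonal p)⁻¹ = Matrix.diagonal fun i => (p i)⁻¹ := by
      refine Matrix.inv_eq_right_inv ?_
      rw [Matrix.diagonal_mul_diagonal]
      convert Matrix.diagonal_one
      exact mul_inv_cancel₀ (ne_of_gt (hp _))
    rw [hpd, ← Matrix.mulVec_mulVec, ← Matrix.mulVec_mulVec, ← Matrix.mulVec_mulVec]
    have hP : (Matrix.diagonal p).mulVec w = fun i => p i * w i := by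
      funext i; rw [Matrix.mulVec_diagonal]
    rw [hP, Matrix.mulVec_diagonal, Matrix.mulVec_diagonal]
    have := hp k
    field_simp
end

section
/- Suppose (x*, c*) ∈ ℝ_{++}^K × ℝ_{++} satisfies T(x*) = (1/c*)·x* and ‖x*‖ = θ, where T = (T^{(1)},…,T^{(K)}) is a vector of standard interference functions and ‖·‖ is a monotone norm. Define utilities u_k(x) = x_k / T^{(k)}(x). Then x* is a solution of max_{x ≥ 0, ‖x‖ ≤ θ} min_k u_k(x), and u_k(x*) = c* for every k. -/
/-- If `(x*, c*)` solves the conditional eigenvalue problem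
`T(x*) = (1/c*)·x*`, `‖x*‖ = θ`, where `T` is a vector of SIFs and `‖·‖ = n` is a
monotone norm, then `x*` maximizes `min_k u_k(x) = min_k x_k / T^(k)(x)` over
`{x ≥ 0 : ‖x‖ ≤ θ}`, and all utilities equal `c*` at `x*`. -/
theorem cevp_solution_solves_maxmin
    {K : ℕ} (hK : 0 < K)
    (T : (Fin K → ℝ) → (Fin K → ℝ))
    (hTpos : ∀ k, ∀ x : Fin K → ℝ, (∀ i, 0 ≤ x i) → 0 < T x k)
    (hTmono : ∀ k, ∀ x y : Fin K → ℝ, (∀ i, 0 ≤ x i) → (∀ i, x i ≤ y i) → T x k ≤ T y k)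
    (hTscal : ∀ k, ∀ x : Fin K → ℝ, (∀ i, 0 ≤ x i) → ∀ α : ℝ, 1 < α →
      T (α • x) k < α * T x k)
    (n : (Fin K → ℝ) → ℝ)
    (hn0 : ∀ x, n x = 0 ↔ x = 0)
    (hnhom : ∀ (c : ℝ) (x), n (c • x) = |c| * n x)
    (hntri : ∀ x y, n (x + y) ≤ n x + n y)
    (hnmono : ∀ x y : Fin K → ℝ, (∀ i, 0 ≤ x i) → (∀ i, x i ≤ y i) → n x ≤ n y)
    (θ : ℝ) (hθ : 0 < θ)
    (xs : Fin K → ℝ) (cs : ℝ) (hxs : ∀ i, 0 < xs i) (hcs : 0 < cs)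
    (hfix : T xs = (1 / cs) • xs) (hbudget : n xs = θ) :
    (∀ k, xs k / T xs k = cs) ∧
      ∀ x : Fin K → ℝ, (∀ i, 0 ≤ x i) → n x ≤ θ →
        (⨅ k : Fin K, x k / T x k) ≤ ⨅ k : Fin K, xs k / T xs k := by
  haveI : Nonempty (Fin K) := ⟨⟨0, hK⟩⟩
  have hu : ∀ k, xs k / T xs k = cs := by
    intro k
    rw [hfix]
    have : ((1 / cs) • xs) k = (1 / cs) * xs k := rfl
    rw [this]
    field_simp
    exact div_self (ne_of_gt (hxs k))
  refine ⟨hu, ?_⟩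
  intro x hx hnx
  have hconst : (⨅ k : Fin K, xs k / T xs k) = cs := by
    simp only [hu]; exact ciInf_const
  rw [hconst]
  have hbdd : BddBelow (Set.range fun k : Fin K => x k / T x k) :=
    (Set.finite_range _).bddBelow
  by_cases hx0 : ∀ i, 0 < x i
  · -- all coordinates positive
    obtain ⟨k0, -, hk0⟩ := Finset.exists_max_image Finset.univ
      (fun k => xs k / x k) ⟨⟨0, hK⟩, Finset.mem_univ _⟩
    set α := xs k0 / x k0 with hα
    have hαpos : 0 < α := div_pos (hxs k0) (hx0 k0)
    have hle : ∀ i, xs i ≤ α * x i := by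
      intro i
      exact (div_le_iff₀ (hx0 i)).mp (hk0 i (Finset.mem_univ i))
    have hα1 : 1 ≤ α := by
      by_contra hαlt
      push_neg at hαlt
      have h1 : n xs ≤ n (α • x) := by
        refine hnmono _ _ (fun i => le_of_lt (hxs i)) (fun i => ?_)
        simpa using hle i
      have h2 : n (α • x) = α * n x := by
        rw [hnhom, abs_of_pos hαpos]
      have : θ ≤ α * n x := by rw [← hbudget]; rw [← h2]; exact h1
      have : θ ≤ α * θ := this.trans (mul_le_mul_of_nonneg_left hnx (le_of_lt hαpos))
      nlinarith
    have hTα : T (α • x) k0 ≤ α * T x k0 := by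
      rcases eq_or_lt_of_le hα1 with h | h
      · rw [← h, one_smul, one_mul]
      · exact le_of_lt (hTscal k0 x hx α h)
    have hTbound : T xs k0 ≤ α * T x k0 := by
      refine le_trans (hTmono k0 xs (α • x) (fun i => le_of_lt (hxs i)) ?_) hTα
      intro i; simpa using hle i
    have hkey : x k0 / T x k0 ≤ cs := by
      have hTx : 0 < T x k0 := hTpos k0 x hx
      have hTxs : 0 < T xs k0 := hTpos k0 xs (fun i => le_of_lt (hxs i))
      have hmul : x k0 * α = xs k0 := by
        rw [hα, mul_comm, div_mul_cancel₀ _ (ne_of_gt (hx0 k0))]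
      rw [← hu k0, div_le_div_iff₀ hTx hTxs]
      calc x k0 * T xs k0 ≤ x k0 * (α * T x k0) :=
            mul_le_mul_of_nonneg_left hTbound (hx k0)
        _ = (x k0 * α) * T x k0 := by ring
        _ = xs k0 * T x k0 := by rw [hmul]
    exact le_trans (ciInf_le hbdd k0) hkey
  · push_neg at hx0
    obtain ⟨i, hi⟩ := hx0
    have hxi : x i = 0 := le_antisymm hi (hx i)
    have : x i / T x i = 0 := by rw [hxi, zero_div]
    calc (⨅ k : Fin K, x k / T x k) ≤ x i / T x i := ciInf_le hbdd i
      _ = 0 := this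
      _ ≤ cs := le_of_lt hcs
end

section
/- Let T = (T^{(1)},…,T^{(K)}) be a vector of standard interference functions, ‖·‖ a monotone norm, and for each θ > 0 let (x_θ, c_θ) be the unique solution of T(x_θ) = (1/c_θ)·x_θ with ‖x_θ‖ = θ. Then the utility function U(θ) := c_θ is nondecreasing in θ. -/
/-- For the conditional eigenvalue problem associated with a vector
`T` of SIFs and a monotone norm `n`, the optimal utility `U(θ) = c_θ` is a
nondecreasing function of the budget `θ`. -/
theorem cevp_utility_monotone
    {K : ℕ}
    (T : (Fin K → ℝ) → (Fin K → ℝ))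
    (hTpos : ∀ k, ∀ x : Fin K → ℝ, (∀ i, 0 ≤ x i) → 0 < T x k)
    (hTmono : ∀ k, ∀ x y : Fin K → ℝ, (∀ i, 0 ≤ x i) → (∀ i, x i ≤ y i) → T x k ≤ T y k)
    (hTscal : ∀ k, ∀ x : Fin K → ℝ, (∀ i, 0 ≤ x i) → ∀ α : ℝ, 1 < α →
      T (α • x) k < α * T x k)
    (n : (Fin K → ℝ) → ℝ)
    (hn0 : ∀ x, n x = 0 ↔ x = 0)
    (hnhom : ∀ (c : ℝ) (x), n (c • x) = |c| * n x)
    (hntri : ∀ x y, n (x + y) ≤ n x + n y)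
    (hnmono : ∀ x y : Fin K → ℝ, (∀ i, 0 ≤ x i) → (∀ i, x i ≤ y i) → n x ≤ n y)
    (x_ : ℝ → (Fin K → ℝ)) (c_ : ℝ → ℝ)
    (hxpos : ∀ θ : ℝ, 0 < θ → ∀ i, 0 < x_ θ i)
    (hcpos : ∀ θ : ℝ, 0 < θ → 0 < c_ θ)
    (hfix : ∀ θ : ℝ, 0 < θ → T (x_ θ) = (1 / c_ θ) • x_ θ)
    (hbudget : ∀ θ : ℝ, 0 < θ → n (x_ θ) = θ)
    (huniq : ∀ θ : ℝ, 0 < θ → ∀ (y : Fin K → ℝ) (d : ℝ), (∀ i, 0 < y i) → 0 < d →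
      T y = (1 / d) • y → n y = θ → y = x_ θ ∧ d = c_ θ) :
    ∀ θ₁ θ₂ : ℝ, 0 < θ₁ → θ₁ ≤ θ₂ → c_ θ₁ ≤ c_ θ₂ := by
  intro θ₁ θ₂ h1 h12
  have h2 : 0 < θ₂ := lt_of_lt_of_le h1 h12
  -- K = 0 is impossible
  rcases Nat.eq_zero_or_pos K with hK | hK
  · exfalso
    have hx0 : x_ θ₁ = 0 := by
      funext i; exact absurd i.2 (by omega)
    have := hbudget θ₁ h1
    rw [hx0, (hn0 0).mpr rfl] at this
    linarith
  · have : Nonempty (Fin K) := ⟨⟨0, hK⟩⟩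
    set x1 := x_ θ₁ with hx1def
    set x2 := x_ θ₂ with hx2def
    have hx1pos : ∀ i, 0 < x1 i := hxpos θ₁ h1
    have hx2pos : ∀ i, 0 < x2 i := hxpos θ₂ h2
    obtain ⟨k, -, hk⟩ := Finset.exists_max_image Finset.univ
      (fun i => x2 i / x1 i) Finset.univ_nonempty
    set lam := x2 k / x1 k with hlam
    have hratio : ∀ i, x2 i ≤ lam * x1 i := by
      intro i
      have := hk i (Finset.mem_univ i)
      calc x2 i = (x2 i / x1 i) * x1 i :=
              (div_mul_cancel₀ _ (ne_of_gt (hx1pos i))).symm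
        _ ≤ lam * x1 i := by
              apply mul_le_mul_of_nonneg_right this (le_of_lt (hx1pos i))
    rcases le_or_gt lam 1 with hl1 | hl1
    · -- x2 ≤ x1, so θ₂ ≤ θ₁, hence θ₁ = θ₂
      have hle : ∀ i, x2 i ≤ x1 i := by
        intro i
        calc x2 i ≤ lam * x1 i := hratio i
          _ ≤ 1 * x1 i := mul_le_mul_of_nonneg_right hl1 (le_of_lt (hx1pos i))
          _ = x1 i := one_mul _
      have : θ₂ ≤ θ₁ := by
        rw [← hbudget θ₁ h1, ← hbudget θ₂ h2]
        exact hnmono _ _ (fun i => le_of_lt (hx2pos i)) hle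
      have heq : θ₁ = θ₂ := le_antisymm h12 this
      rw [heq]
    · -- lam > 1 case
      have hkeq : x2 k = lam * x1 k := by
        exact (div_mul_cancel₀ _ (ne_of_gt (hx1pos k))).symm
      have hc1 := hcpos θ₁ h1
      have hc2 := hcpos θ₂ h2
      have hstep : T x2 k ≤ T (lam • x1) k :=
        hTmono k x2 (lam • x1) (fun i => le_of_lt (hx2pos i))
          (fun i => by simpa using hratio i)
      have hscal : T (lam • x1) k < lam * T x1 k :=
        hTscal k x1 (fun i => le_of_lt (hx1pos i)) lam hl1
      have hf1 : T x1 k = (1 / c_ θ₁) * x1 k := by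
        have := hfix θ₁ h1
        rw [← hx1def] at this
        rw [this]; rfl
      have hf2 : T x2 k = (1 / c_ θ₂) * x2 k := by
        have := hfix θ₂ h2
        rw [← hx2def] at this
        rw [this]; rfl
      have key : (1 / c_ θ₂) * x2 k < (1 / c_ θ₁) * x2 k := by
        calc (1 / c_ θ₂) * x2 k = T x2 k := hf2.symm
          _ ≤ T (lam • x1) k := hstep
          _ < lam * T x1 k := hscal
          _ = (1 / c_ θ₁) * (lam * x1 k) := by rw [hf1]; ring
          _ = (1 / c_ θ₁) * x2 k := by rw [hkeq]
      have hinv : 1 / c_ θ₂ < 1 / c_ θ₁ :=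
        lt_of_mul_lt_mul_right (by linarith [hx2pos k]) (le_of_lt (hx2pos k))
      rw [div_lt_div_iff₀ hc2 hc1] at hinv
      linarith
end

section
/- Under the assumptions of the conditional eigenvalue problem, if the asymptotic CEVP T_∞(x_∞) = λ_∞·x_∞, ‖x_∞‖ = 1 has a unique positive solution (x_∞, λ_∞), then sup_{θ>0} U(θ) = lim_{θ→∞} U(θ) = 1/λ_∞; that is, the optimal max-min utility is bounded above by 1/λ_∞ for every finite budget and approaches this bound as the budget tends to infinity. -/
open Filter

section aux
variable {K : ℕ}

private lemma aux_anti
    (T : (Fin K → ℝ) → (Fin K → ℝ))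
    (hTscal : ∀ k, ∀ x : Fin K → ℝ, (∀ i, 0 ≤ x i) → ∀ α : ℝ, 1 < α →
      T (α • x) k < α * T x k)
    (k : Fin K) (x : Fin K → ℝ) (hx : ∀ i, 0 ≤ x i)
    {u v : ℝ} (hu : 0 < u) (huv : u ≤ v) :
    T (v • x) k / v ≤ T (u • x) k / u := by
  rcases eq_or_lt_of_le huv with h | h
  · rw [h]
  · have hv : 0 < v := hu.trans h
    have hα : 1 < v / u := (one_lt_div hu).2 h
    have hux : ∀ i, 0 ≤ (u • x) i := fun i => mul_nonneg hu.le (hx i)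
    have h2 := hTscal k (u • x) hux (v / u) hα
    have hvx : (v / u) • (u • x) = v • x := by
      rw [smul_smul, div_mul_cancel₀ _ hu.ne']
    rw [hvx] at h2
    rw [div_le_div_iff₀ hv hu]
    calc T (v • x) k * u ≤ (v / u * T (u • x) k) * u :=
          (mul_le_mul_of_nonneg_right h2.le hu.le)
      _ = T (u • x) k * v := by field_simp

private lemma aux_le
    (T : (Fin K → ℝ) → (Fin K → ℝ))
    (hTscal : ∀ k, ∀ x : Fin K → ℝ, (∀ i, 0 ≤ x i) → ∀ α : ℝ, 1 < α →
      T (α • x) k < α * T x k)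
    (Tinf : (Fin K → ℝ) → (Fin K → ℝ))
    (hTinf : ∀ (k : Fin K) (x : Fin K → ℝ), (∀ i, 0 ≤ x i) →
      Tendsto (fun h : ℝ => T (h • x) k / h) atTop (nhds (Tinf x k)))
    (k : Fin K) (x : Fin K → ℝ) (hx : ∀ i, 0 ≤ x i) {u : ℝ} (hu : 0 < u) :
    Tinf x k ≤ T (u • x) k / u :=
  le_of_tendsto (hTinf k x hx)
    ((eventually_ge_atTop u).mono fun h hh => aux_anti T hTscal k x hx hu hh)

private lemma aux_mono
    (T : (Fin K → ℝ) → (Fin K → ℝ))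
    (hTmono : ∀ k, ∀ x y : Fin K → ℝ, (∀ i, 0 ≤ x i) → (∀ i, x i ≤ y i) → T x k ≤ T y k)
    (Tinf : (Fin K → ℝ) → (Fin K → ℝ))
    (hTinf : ∀ (k : Fin K) (x : Fin K → ℝ), (∀ i, 0 ≤ x i) →
      Tendsto (fun h : ℝ => T (h • x) k / h) atTop (nhds (Tinf x k)))
    (k : Fin K) {x y : Fin K → ℝ} (hx : ∀ i, 0 ≤ x i) (hxy : ∀ i, x i ≤ y i) :
    Tinf x k ≤ Tinf y k := by
  have hy : ∀ i, 0 ≤ y i := fun i => (hx i).trans (hxy i)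
  refine le_of_tendsto_of_tendsto (hTinf k x hx) (hTinf k y hy) ?_
  filter_upwards [eventually_gt_atTop (0:ℝ)] with h hh
  have h1 : T (h • x) k ≤ T (h • y) k :=
    hTmono k _ _ (fun i => mul_nonneg hh.le (hx i))
      (fun i => mul_le_mul_of_nonneg_left (hxy i) hh.le)
  gcongr

private lemma aux_homog
    (T : (Fin K → ℝ) → (Fin K → ℝ))
    (Tinf : (Fin K → ℝ) → (Fin K → ℝ))
    (hTinf : ∀ (k : Fin K) (x : Fin K → ℝ), (∀ i, 0 ≤ x i) →
      Tendsto (fun h : ℝ => T (h • x) k / h) atTop (nhds (Tinf x k)))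
    (k : Fin K) (x : Fin K → ℝ) (hx : ∀ i, 0 ≤ x i) {c : ℝ} (hc : 0 < c) :
    Tinf (c • x) k = c * Tinf x k := by
  have h1 := hTinf k (c • x) (fun i => mul_nonneg hc.le (hx i))
  have hz : Tendsto (fun h : ℝ => h * c) atTop atTop :=
    Tendsto.atTop_mul_const hc tendsto_id
  have h2 : Tendsto (fun h : ℝ => c * (T ((h * c) • x) k / (h * c))) atTop
      (nhds (c * Tinf x k)) := ((hTinf k x hx).comp hz).const_mul c
  have heq : (fun h : ℝ => c * (T ((h * c) • x) k / (h * c))) =ᶠ[atTop]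
      (fun h : ℝ => T (h • (c • x)) k / h) := by
    filter_upwards [eventually_gt_atTop (0:ℝ)] with h hh
    rw [smul_smul]
    field_simp
  exact tendsto_nhds_unique h1 (h2.congr' heq)
end aux

section aux2
variable {K : ℕ}

private lemma n_nonneg (n : (Fin K → ℝ) → ℝ)
    (hn0 : ∀ x : Fin K → ℝ, n x = 0 ↔ x = 0)
    (hnhom : ∀ (c : ℝ) (x : Fin K → ℝ), n (c • x) = |c| * n x)
    (hntri : ∀ x y : Fin K → ℝ, n (x + y) ≤ n x + n y) (x : Fin K → ℝ) :
    0 ≤ n x := by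
  have h0 : n 0 = 0 := (hn0 0).2 rfl
  have h1 : n (x + (-1 : ℝ) • x) ≤ n x + n ((-1 : ℝ) • x) := hntri _ _
  have h2 : n ((-1 : ℝ) • x) = n x := by rw [hnhom]; simp
  have h3 : x + (-1 : ℝ) • x = 0 := by funext i; simp
  rw [h3, h0, h2] at h1
  linarith

private lemma n_sum_le (n : (Fin K → ℝ) → ℝ)
    (hn0 : ∀ x : Fin K → ℝ, n x = 0 ↔ x = 0)
    (hntri : ∀ x y : Fin K → ℝ, n (x + y) ≤ n x + n y)
    {ι : Type*} (s : Finset ι) (f : ι → Fin K → ℝ) :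
    n (∑ i ∈ s, f i) ≤ ∑ i ∈ s, n (f i) := by
  classical
  induction s using Finset.induction_on with
  | empty => simp [(hn0 0).2 rfl]
  | insert _ _ h ih =>
    rw [Finset.sum_insert h, Finset.sum_insert h]
    exact (hntri _ _).trans (by linarith)

private lemma n_lip (n : (Fin K → ℝ) → ℝ)
    (hn0 : ∀ x : Fin K → ℝ, n x = 0 ↔ x = 0)
    (hnhom : ∀ (c : ℝ) (x : Fin K → ℝ), n (c • x) = |c| * n x)
    (hntri : ∀ x y : Fin K → ℝ, n (x + y) ≤ n x + n y) (a b : Fin K → ℝ) :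
    |n a - n b| ≤ (∑ k, n (Pi.single k 1)) * dist a b := by
  have key : ∀ u v : Fin K → ℝ, n u - n v ≤ (∑ k, n (Pi.single k 1)) * dist u v := by
    intro u v
    have h1 : n u ≤ n v + n (u - v) := by
      have := hntri v (u - v)
      simpa using this
    have h2 : n (u - v) ≤ (∑ k, n (Pi.single k 1)) * dist u v := by
      have hdec : u - v = ∑ k, Pi.single k ((u - v) k) := (Finset.univ_sum_single (u - v)).symm
      rw [hdec]
      refine (n_sum_le n hn0 hntri _ _).trans ?_
      have hterm : ∀ k : Fin K, n (Pi.single k ((u - v) k)) ≤ dist u v * n (Pi.single k 1) := by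
        intro k
        have hsingle : Pi.single k ((u - v) k) = ((u - v) k) • (Pi.single k 1 : Fin K → ℝ) := by
          funext j
          by_cases hj : j = k <;> simp [Pi.single_apply, hj]
        rw [hsingle, hnhom]
        have habs : |(u - v) k| ≤ dist u v := by
          have := dist_le_pi_dist u v k
          rw [Real.dist_eq] at this
          simpa using this
        exact mul_le_mul_of_nonneg_right habs (n_nonneg n hn0 hnhom hntri _)
      refine (Finset.sum_le_sum fun k _ => hterm k).trans ?_
      rw [← Finset.mul_sum, mul_comm]
    linarith
  have ha := key a b
  have hb := key b a
  rw [dist_comm b a] at hb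
  rw [abs_sub_le_iff]
  exact ⟨ha, hb⟩
end aux2


open Filter

/-- If the asymptotic CEVP `T_∞(x_∞) = λ_∞ x_∞`, `‖x_∞‖ = 1` has a
unique positive solution, then `sup_{θ>0} U(θ) = lim_{θ→∞} U(θ) = 1/λ_∞`: the
optimal utility is bounded by `1/λ_∞` for every budget and attains this bound
asymptotically. -/
theorem cevp_utility_asymptotic_limit
    {K : ℕ}
    (T : (Fin K → ℝ) → (Fin K → ℝ))
    (hTpos : ∀ k, ∀ x : Fin K → ℝ, (∀ i, 0 ≤ x i) → 0 < T x k)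
    (hTmono : ∀ k, ∀ x y : Fin K → ℝ, (∀ i, 0 ≤ x i) → (∀ i, x i ≤ y i) → T x k ≤ T y k)
    (hTscal : ∀ k, ∀ x : Fin K → ℝ, (∀ i, 0 ≤ x i) → ∀ α : ℝ, 1 < α →
      T (α • x) k < α * T x k)
    (n : (Fin K → ℝ) → ℝ)
    (hn0 : ∀ x, n x = 0 ↔ x = 0)
    (hnhom : ∀ (c : ℝ) (x), n (c • x) = |c| * n x)
    (hntri : ∀ x y, n (x + y) ≤ n x + n y)
    (hnmono : ∀ x y : Fin K → ℝ, (∀ i, 0 ≤ x i) → (∀ i, x i ≤ y i) → n x ≤ n y)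
    (x_ : ℝ → (Fin K → ℝ)) (c_ : ℝ → ℝ)
    (hxpos : ∀ θ : ℝ, 0 < θ → ∀ i, 0 < x_ θ i)
    (hcpos : ∀ θ : ℝ, 0 < θ → 0 < c_ θ)
    (hfix : ∀ θ : ℝ, 0 < θ → T (x_ θ) = (1 / c_ θ) • x_ θ)
    (hbudget : ∀ θ : ℝ, 0 < θ → n (x_ θ) = θ)
    (huniq : ∀ θ : ℝ, 0 < θ → ∀ (y : Fin K → ℝ) (d : ℝ), (∀ i, 0 < y i) → 0 < d →
      T y = (1 / d) • y → n y = θ → y = x_ θ ∧ d = c_ θ)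
    (Tinf : (Fin K → ℝ) → (Fin K → ℝ))
    (hTinf : ∀ (k : Fin K) (x : Fin K → ℝ), (∀ i, 0 ≤ x i) →
      Tendsto (fun h : ℝ => T (h • x) k / h) atTop (nhds (Tinf x k)))
    (xinf : Fin K → ℝ) (laminf : ℝ)
    (hxinf : ∀ i, 0 < xinf i) (hlaminf : 0 < laminf)
    (hasymfix : Tinf xinf = laminf • xinf) (hasymnorm : n xinf = 1)
    (hasymuniq : ∀ (y : Fin K → ℝ) (μ : ℝ), (∀ i, 0 < y i) → 0 < μ →
      Tinf y = μ • y → n y = 1 → y = xinf ∧ μ = laminf) :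
    (∀ θ : ℝ, 0 < θ → c_ θ ≤ 1 / laminf)
    ∧ (⨆ θ : Set.Ioi (0 : ℝ), c_ θ) = 1 / laminf
    ∧ Tendsto (fun θ : ℝ => c_ θ) atTop (nhds (1 / laminf)) := by
  -- dispose of the degenerate case K = 0
  rcases Nat.eq_zero_or_pos K with hK0 | hK
  · exfalso
    subst hK0
    have hx0 : xinf = 0 := funext fun i => absurd i.2 (by simp)
    rw [hx0, (hn0 0).2 rfl] at hasymnorm
    exact zero_ne_one hasymnorm
  have hxinf_nn : ∀ i, 0 ≤ xinf i := fun i => (hxinf i).le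
  -- Part 1 core: laminf ≤ 1 / c_ θ for all θ > 0
  have key1 : ∀ θ : ℝ, 0 < θ → laminf ≤ 1 / c_ θ := by
    intro θ hθ
    obtain ⟨k1, -, hk1⟩ := Finset.exists_min_image Finset.univ
      (fun k => x_ θ k / xinf k) ⟨⟨0, hK⟩, Finset.mem_univ _⟩
    set m := x_ θ k1 / xinf k1 with hm
    have hmpos : 0 < m := div_pos (hxpos θ hθ k1) (hxinf k1)
    have hge : ∀ k, m * xinf k ≤ x_ θ k := by
      intro k
      have h := hk1 k (Finset.mem_univ k)
      rw [le_div_iff₀ (hxinf k)] at h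
      exact h
    have hTin : Tinf xinf k1 ≤ T (m • xinf) k1 / m :=
      aux_le T hTscal Tinf hTinf k1 xinf hxinf_nn hmpos
    have hTm : T (m • xinf) k1 ≤ T (x_ θ) k1 :=
      hTmono k1 _ _ (fun i => by
          simpa using mul_nonneg hmpos.le (hxinf_nn i))
        (fun i => by simpa using hge i)
    have hTfix : T (x_ θ) k1 = (1 / c_ θ) * x_ θ k1 := by
      rw [hfix θ hθ]; simp
    have hx1 : x_ θ k1 = m * xinf k1 := by
      rw [hm, div_mul_cancel₀ _ (hxinf k1).ne']
    have hTik1 : Tinf xinf k1 = laminf * xinf k1 := by rw [hasymfix]; simp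
    have h5 : laminf * xinf k1 ≤ (1 / c_ θ) * xinf k1 := by
      have hstep : laminf * xinf k1 ≤ (1 / c_ θ) * (m * xinf k1) / m := by
        calc laminf * xinf k1 = Tinf xinf k1 := hTik1.symm
          _ ≤ T (m • xinf) k1 / m := hTin
          _ ≤ T (x_ θ) k1 / m := by gcongr
          _ = (1 / c_ θ) * (m * xinf k1) / m := by rw [hTfix, hx1]
      have h6 : (1 / c_ θ) * (m * xinf k1) / m = (1 / c_ θ) * xinf k1 := by
        field_simp
      rwa [h6] at hstep
    have h7 : laminf * xinf k1 ≤ 1 / c_ θ * xinf k1 := h5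
    exact le_of_mul_le_mul_right h7 (hxinf k1)
  have part1 : ∀ θ : ℝ, 0 < θ → c_ θ ≤ 1 / laminf := by
    intro θ hθ
    have hc := hcpos θ hθ
    have h := key1 θ hθ
    rw [le_div_iff₀ hc] at h
    rw [le_div_iff₀ hlaminf]
    linarith [mul_comm laminf (c_ θ)]
  -- the eventual upper bound
  have key2 : ∀ ε : ℝ, 0 < ε → ∀ᶠ θ : ℝ in atTop, 1 / c_ θ < laminf + ε := by
    intro ε hε
    by_contra hcon
    rw [Filter.not_eventually] at hcon
    simp only [not_lt] at hcon
    have hch := frequently_atTop.mp hcon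
    choose g hg1 hg2 using fun j : ℕ => hch ((j : ℝ) + 1)
    have hgpos : ∀ j, 0 < g j := fun j => lt_of_lt_of_le (by positivity) (hg1 j)
    set Y : ℕ → (Fin K → ℝ) := fun j => (g j)⁻¹ • x_ (g j) with hYdef
    have hYnn : ∀ j i, 0 ≤ Y j i := fun j i =>
      mul_nonneg (inv_nonneg.2 (hgpos j).le) (hxpos _ (hgpos j) i).le
    have hnY : ∀ j, n (Y j) = 1 := by
      intro j
      rw [hYdef]
      simp only []
      rw [hnhom, hbudget _ (hgpos j), abs_of_pos (inv_pos.2 (hgpos j))]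
      exact inv_mul_cancel₀ (hgpos j).ne'
    have hsing : ∀ k : Fin K, 0 < n (Pi.single k 1) := by
      intro k
      rcases lt_or_eq_of_le (n_nonneg n hn0 hnhom hntri (Pi.single k 1)) with h | h
      · exact h
      · exfalso
        have h1 := (hn0 _).1 h.symm
        have h2 := congrFun h1 k
        simp at h2
    have hYmem : ∀ j, Y j ∈ Set.Icc (0 : Fin K → ℝ) (fun k => (n (Pi.single k 1))⁻¹) := by
      intro j
      refine ⟨Pi.le_def.2 fun i => hYnn j i, Pi.le_def.2 fun k => ?_⟩
      have hle : ∀ i, (Y j k • (Pi.single k 1 : Fin K → ℝ)) i ≤ Y j i := by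
        intro i
        by_cases hik : i = k
        · subst hik; simp
        · simp [Pi.single_eq_of_ne hik, hYnn j i]
      have hnn : ∀ i, 0 ≤ (Y j k • (Pi.single k 1 : Fin K → ℝ)) i := by
        intro i
        by_cases hik : i = k
        · subst hik; simpa using hYnn j i
        · simp [Pi.single_eq_of_ne hik]
      have h2 := hnmono _ _ hnn hle
      rw [hnhom, hnY j, abs_of_nonneg (hYnn j k)] at h2
      rw [← one_div, le_div_iff₀ (hsing k)]
      exact h2
    obtain ⟨ystar, hymem, φ, hφ, hyconv⟩ :=
      (isCompact_Icc (a := (0 : Fin K → ℝ))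
        (b := fun k => (n (Pi.single k 1))⁻¹)).tendsto_subseq hYmem
    set z : ℕ → ℝ := fun j => g (φ j) with hzdef
    set Z : ℕ → (Fin K → ℝ) := Y ∘ φ with hZdef
    have hzpos : ∀ j, 0 < z j := fun j => hgpos (φ j)
    have hztop : Tendsto z atTop atTop := by
      have h1 : Tendsto (fun j : ℕ => (j : ℝ) + 1) atTop atTop :=
        tendsto_atTop_add_const_right _ 1 tendsto_natCast_atTop_atTop
      have h2 : ∀ j : ℕ, (j : ℝ) + 1 ≤ z j := by
        intro j
        have h3 : (j : ℝ) ≤ (φ j : ℝ) := Nat.cast_le.mpr hφ.le_apply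
        have h4 := hg1 (φ j)
        show ((j : ℝ) + 1) ≤ g (φ j)
        linarith
      exact tendsto_atTop_mono h2 h1
    have hysnn : ∀ i, 0 ≤ ystar i := fun i => hymem.1 i
    -- the norm of the limit point is 1
    have hnys : n ystar = 1 := by
      have hdist0 : Tendsto (fun j => dist (Z j) ystar) atTop (nhds 0) :=
        tendsto_iff_dist_tendsto_zero.mp hyconv
      have hL : Tendsto (fun j => n (Z j) - n ystar) atTop (nhds 0) := by
        refine squeeze_zero_norm (a := fun j => (∑ k, n (Pi.single k 1)) * dist (Z j) ystar) (fun j => ?_) ?_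
        · rw [Real.norm_eq_abs]
          exact n_lip n hn0 hnhom hntri _ _
        · have := hdist0.const_mul (∑ k, n (Pi.single k 1))
          simpa using this
      have hconst : Tendsto (fun _ : ℕ => 1 - n ystar) atTop (nhds 0) :=
        hL.congr (fun j => by rw [show Z j = Y (φ j) from rfl, hnY (φ j)])
      have h0 := tendsto_nhds_unique hconst tendsto_const_nhds
      linarith
    have hex : ∃ k, 0 < ystar k := by
      by_contra hcon2
      push_neg at hcon2
      have hy0 : ystar = 0 := funext fun k => le_antisymm (hcon2 k) (hysnn k)
      rw [hy0, (hn0 0).2 rfl] at hnys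
      exact zero_ne_one hnys
    obtain ⟨k0, -, hk0⟩ := Finset.exists_max_image Finset.univ
      (fun k => ystar k / xinf k) ⟨⟨0, hK⟩, Finset.mem_univ _⟩
    set s0 := ystar k0 / xinf k0 with hs0
    obtain ⟨kp, hkp⟩ := hex
    have hs0pos : 0 < s0 :=
      lt_of_lt_of_le (div_pos hkp (hxinf kp)) (hk0 kp (Finset.mem_univ kp))
    have hyle : ∀ k, ystar k ≤ s0 * xinf k := fun k =>
      (div_le_iff₀ (hxinf k)).1 (hk0 k (Finset.mem_univ k))
    have hyk0 : ystar k0 = s0 * xinf k0 := by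
      rw [hs0, div_mul_cancel₀ _ (hxinf k0).ne']
    obtain ⟨km, -, hkm⟩ := Finset.exists_min_image Finset.univ xinf ⟨⟨0, hK⟩, Finset.mem_univ _⟩
    have hmI : 0 < xinf km := hxinf km
    -- the key estimate, for every δ' > 0
    have claim : ∀ δ' : ℝ, 0 < δ' →
        (laminf + ε) * ystar k0 ≤ (s0 + δ') * (laminf * xinf k0) := by
      intro δ' hδ'
      set δ := δ' * xinf km with hδdef
      have hδ : 0 < δ := mul_pos hδ' hmI
      set w : Fin K → ℝ := fun i => ystar i + δ with hwdef
      have hw : ∀ i, 0 ≤ w i := fun i => add_nonneg (hysnn i) hδ.le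
      have hA : (laminf + ε) * ystar k0 ≤ Tinf w k0 := by
        have hlim1 : Tendsto (fun j => (laminf + ε) * Z j k0) atTop
            (nhds ((laminf + ε) * ystar k0)) :=
          ((tendsto_pi_nhds.mp hyconv) k0).const_mul _
        have hlim2 : Tendsto (fun j => T (z j • w) k0 / z j) atTop (nhds (Tinf w k0)) :=
          (hTinf k0 w hw).comp hztop
        refine le_of_tendsto_of_tendsto hlim1 hlim2 ?_
        have hev := Metric.tendsto_nhds.mp hyconv δ hδ
        filter_upwards [hev] with j hj
        have hzj := hzpos j
        have hZle : ∀ i, Z j i ≤ w i := by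
          intro i
          have h1 := dist_le_pi_dist (Z j) ystar i
          rw [Real.dist_eq] at h1
          have h2 := (abs_le.1 (h1.trans hj.le)).2
          simp only [hwdef]
          linarith
        have hxz : z j • Z j = x_ (z j) := by
          show z j • ((g (φ j))⁻¹ • x_ (g (φ j))) = x_ (z j)
          exact smul_inv_smul₀ (hzj.ne') _
        have hZnn : ∀ i, 0 ≤ Z j i := fun i => hYnn (φ j) i
        show (laminf + ε) * Z j k0 ≤ T (z j • w) k0 / z j
        calc (laminf + ε) * Z j k0 ≤ (1 / c_ (z j)) * Z j k0 :=
              mul_le_mul_of_nonneg_right (hg2 (φ j)) (hZnn k0)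
          _ = T (z j • Z j) k0 / z j := by
              rw [hxz, hfix (z j) hzj]
              have hx0 : x_ (z j) k0 = z j * Z j k0 := by
                rw [← hxz]; simp
              simp only [Pi.smul_apply, smul_eq_mul, hx0]
              field_simp
          _ ≤ T (z j • w) k0 / z j := by
              have hnum := hTmono k0 (z j • Z j) (z j • w)
                (fun i => by simpa using mul_nonneg hzj.le (hZnn i))
                (fun i => by simpa using mul_le_mul_of_nonneg_left (hZle i) hzj.le)
              gcongr
      have hspos : 0 < s0 + δ' := by linarith
      have hB : Tinf w k0 ≤ (s0 + δ') * (laminf * xinf k0) := by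
        have hwle : ∀ i, w i ≤ ((s0 + δ') • xinf) i := by
          intro i
          have h1 : ystar i ≤ s0 * xinf i := hyle i
          have h2 : δ ≤ δ' * xinf i := by
            rw [hδdef]
            exact mul_le_mul_of_nonneg_left (hkm i (Finset.mem_univ i)) hδ'.le
          have h3 : (s0 + δ') * xinf i = s0 * xinf i + δ' * xinf i := by ring
          simp only [Pi.smul_apply, smul_eq_mul, hwdef]
          linarith
        have hmono := aux_mono T hTmono Tinf hTinf k0 hw hwle
        have hhom := aux_homog T Tinf hTinf k0 xinf hxinf_nn hspos
        rw [hhom] at hmono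
        have hTik0 : Tinf xinf k0 = laminf * xinf k0 := by rw [hasymfix]; simp
        rw [hTik0] at hmono
        exact hmono
      exact hA.trans hB
    -- derive the contradiction
    have hys0 : 0 < ystar k0 := by rw [hyk0]; exact mul_pos hs0pos (hxinf k0)
    have hCpos : 0 < laminf * xinf k0 := mul_pos hlaminf (hxinf k0)
    set C := laminf * xinf k0 with hC
    have hfin := claim (ε * ystar k0 / (2 * C)) (by positivity)
    have hdiv : (ε * ystar k0 / (2 * C)) * C = ε * ystar k0 / 2 := by
      field_simp
    have hsC : s0 * C = laminf * ystar k0 := by rw [hC, hyk0]; ring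
    have hexp : (s0 + ε * ystar k0 / (2 * C)) * C = s0 * C + (ε * ystar k0 / (2 * C)) * C := by
      ring
    rw [hexp, hdiv, hsC] at hfin
    nlinarith [mul_pos hε hys0]
  -- convergence of 1 / c_
  have hcinv : Tendsto (fun θ => 1 / c_ θ) atTop (nhds laminf) := by
    rw [tendsto_order]
    constructor
    · intro a ha
      filter_upwards [eventually_gt_atTop (0 : ℝ)] with θ hθ
      exact lt_of_lt_of_le ha (key1 θ hθ)
    · intro a ha
      have h := key2 (a - laminf) (by linarith)
      filter_upwards [h] with θ hθ
      linarith
  have part3 : Tendsto (fun θ : ℝ => c_ θ) atTop (nhds (1 / laminf)) := by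
    have h1 : Tendsto (fun θ => (1 / c_ θ)⁻¹) atTop (nhds laminf⁻¹) :=
      hcinv.inv₀ hlaminf.ne'
    rw [one_div]
    apply h1.congr'
    filter_upwards [eventually_gt_atTop (0 : ℝ)] with θ hθ
    rw [one_div, inv_inv]
  refine ⟨part1, ?_, part3⟩
  haveI hne : Nonempty (Set.Ioi (0 : ℝ)) := ⟨⟨1, by norm_num⟩⟩
  have hbdd : BddAbove (Set.range fun θ : Set.Ioi (0 : ℝ) => c_ θ) := by
    refine ⟨1 / laminf, ?_⟩
    rintro x ⟨θ, rfl⟩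
    exact part1 θ θ.2
  apply le_antisymm
  · exact ciSup_le fun θ => part1 θ θ.2
  · refine le_of_tendsto part3 ?_
    filter_upwards [eventually_gt_atTop (0 : ℝ)] with θ hθ
    exact le_ciSup hbdd ⟨θ, hθ⟩
end

section
/- Under the CEVP assumptions, the resource efficiency E(θ) = U(θ)/θ satisfies E(θ) ≤ min{1/‖T(0)‖, 1/(λ_∞·θ)} for all θ > 0. -/
open Filter

/-- The resource efficiency satisfies
`E(θ) = U(θ)/θ ≤ min{1/‖T(0)‖, 1/(λ_∞ θ)}` for every `θ > 0`. -/
theorem cevp_efficiency_upper_bound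
    {K : ℕ}
    (T : (Fin K → ℝ) → (Fin K → ℝ))
    (hTpos : ∀ k, ∀ x : Fin K → ℝ, (∀ i, 0 ≤ x i) → 0 < T x k)
    (hTmono : ∀ k, ∀ x y : Fin K → ℝ, (∀ i, 0 ≤ x i) → (∀ i, x i ≤ y i) → T x k ≤ T y k)
    (hTscal : ∀ k, ∀ x : Fin K → ℝ, (∀ i, 0 ≤ x i) → ∀ α : ℝ, 1 < α →
      T (α • x) k < α * T x k)
    (n : (Fin K → ℝ) → ℝ)
    (hn0 : ∀ x, n x = 0 ↔ x = 0)
    (hnhom : ∀ (c : ℝ) (x), n (c • x) = |c| * n x)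
    (hntri : ∀ x y, n (x + y) ≤ n x + n y)
    (hnmono : ∀ x y : Fin K → ℝ, (∀ i, 0 ≤ x i) → (∀ i, x i ≤ y i) → n x ≤ n y)
    (x_ : ℝ → (Fin K → ℝ)) (c_ : ℝ → ℝ)
    (hxpos : ∀ θ : ℝ, 0 < θ → ∀ i, 0 < x_ θ i)
    (hcpos : ∀ θ : ℝ, 0 < θ → 0 < c_ θ)
    (hfix : ∀ θ : ℝ, 0 < θ → T (x_ θ) = (1 / c_ θ) • x_ θ)
    (hbudget : ∀ θ : ℝ, 0 < θ → n (x_ θ) = θ)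
    (huniq : ∀ θ : ℝ, 0 < θ → ∀ (y : Fin K → ℝ) (d : ℝ), (∀ i, 0 < y i) → 0 < d →
      T y = (1 / d) • y → n y = θ → y = x_ θ ∧ d = c_ θ)
    (Tinf : (Fin K → ℝ) → (Fin K → ℝ))
    (hTinf : ∀ (k : Fin K) (x : Fin K → ℝ), (∀ i, 0 ≤ x i) →
      Tendsto (fun h : ℝ => T (h • x) k / h) atTop (nhds (Tinf x k)))
    (xinf : Fin K → ℝ) (laminf : ℝ)
    (hxinf : ∀ i, 0 < xinf i) (hlaminf : 0 < laminf)
    (hasymfix : Tinf xinf = laminf • xinf) (hasymnorm : n xinf = 1)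
    (hasymuniq : ∀ (y : Fin K → ℝ) (μ : ℝ), (∀ i, 0 < y i) → 0 < μ →
      Tinf y = μ • y → n y = 1 → y = xinf ∧ μ = laminf) :
    ∀ θ : ℝ, 0 < θ → c_ θ / θ ≤ min (1 / n (T 0)) (1 / (laminf * θ)) := by

  intro θ hθ
  have hc := hcpos θ hθ
  have hx := hxpos θ hθ
  have hxnn : ∀ i, 0 ≤ x_ θ i := fun i => (hx i).le
  -- K is nonempty
  have hne : Nonempty (Fin K) := by
    by_contra h
    have he : IsEmpty (Fin K) := not_nonempty_iff.mp h
    have : x_ θ = 0 := funext fun i => he.elim i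
    have := (hn0 (x_ θ)).mpr this
    rw [hbudget θ hθ] at this
    exact hθ.ne' this
  -- Part 1 : c_θ/θ ≤ 1 / n (T 0)
  have hT0nn : ∀ i, 0 ≤ T 0 i := fun i => (hTpos i 0 (fun _ => le_refl 0)).le
  have hT0nz : T 0 ≠ 0 := by
    intro h
    have hp := hTpos hne.some 0 (fun _ => le_refl 0)
    rw [h] at hp
    exact lt_irrefl 0 hp
  have hT0nn0 : 0 ≤ n (T 0) := by
    have h0 : n (0 : Fin K → ℝ) = 0 := (hn0 0).mpr rfl
    have := hnmono 0 (T 0) (fun _ => le_refl 0) hT0nn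
    linarith
  have hT0pos : 0 < n (T 0) :=
    lt_of_le_of_ne hT0nn0 (fun h => hT0nz ((hn0 _).mp h.symm))
  have hmono1 : n (T 0) ≤ n (T (x_ θ)) :=
    hnmono (T 0) (T (x_ θ)) hT0nn (fun i => hTmono i 0 (x_ θ) (fun _ => le_refl 0) hxnn)
  have hval : n (T (x_ θ)) = θ / c_ θ := by
    rw [hfix θ hθ, hnhom, hbudget θ hθ, abs_of_pos (by positivity)]
    field_simp
  have part1 : c_ θ / θ ≤ 1 / n (T 0) := by
    rw [hval] at hmono1
    rw [div_le_div_iff₀ hθ hT0pos, one_mul]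
    calc c_ θ * n (T 0) ≤ c_ θ * (θ / c_ θ) := by
          exact mul_le_mul_of_nonneg_left hmono1 hc.le
      _ = θ := by field_simp
  -- Tinf facts
  have tinf_le : ∀ (k : Fin K) (x : Fin K → ℝ), (∀ i, 0 ≤ x i) → Tinf x k ≤ T x k := by
    intro k x hxn
    refine le_of_tendsto (hTinf k x hxn) ?_
    filter_upwards [eventually_gt_atTop (1:ℝ)] with h hh
    have := hTscal k x hxn h hh
    have h0 : (0:ℝ) < h := lt_trans one_pos hh
    rw [div_le_iff₀ h0]
    nlinarith
  have tinf_mono : ∀ (k : Fin K) (x y : Fin K → ℝ), (∀ i, 0 ≤ x i) → (∀ i, x i ≤ y i) →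
      Tinf x k ≤ Tinf y k := by
    intro k x y hxn hxy
    refine le_of_tendsto_of_tendsto (hTinf k x hxn) (hTinf k y (fun i => (hxn i).trans (hxy i))) ?_
    filter_upwards [eventually_gt_atTop (0:ℝ)] with h h0
    have hle : T (h • x) k ≤ T (h • y) k := by
      refine hTmono k (h • x) (h • y) (fun i => ?_) (fun i => ?_)
      · exact mul_nonneg h0.le (hxn i)
      · exact mul_le_mul_of_nonneg_left (hxy i) h0.le
    exact div_le_div_of_nonneg_right hle h0.le
  have tinf_hom : ∀ (k : Fin K) (x : Fin K → ℝ), (∀ i, 0 ≤ x i) → ∀ t : ℝ, 0 < t →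
      Tinf (t • x) k = t * Tinf x k := by
    intro k x hxn t ht
    have htxn : ∀ i, 0 ≤ (t • x) i := fun i => mul_nonneg ht.le (hxn i)
    have h1 := hTinf k (t • x) htxn
    have hcomp : Tendsto (fun h : ℝ => T ((h * t) • x) k / (h * t)) atTop (nhds (Tinf x k)) :=
      (hTinf k x hxn).comp (Tendsto.atTop_mul_const ht tendsto_id)
    have h2 : Tendsto (fun h : ℝ => T (h • (t • x)) k / h) atTop (nhds (t * Tinf x k)) := by
      have := hcomp.const_mul t
      refine this.congr' ?_
      filter_upwards [eventually_gt_atTop (0:ℝ)] with h h0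
      rw [smul_smul]
      rw [mul_comm h t]
      field_simp
    exact tendsto_nhds_unique h1 h2
  -- Part 2 : laminf ≤ 1 / c_ θ
  obtain ⟨i₀, _, hi₀⟩ := Finset.exists_min_image Finset.univ
    (fun i => x_ θ i / xinf i) (Finset.univ_nonempty)
  set t := x_ θ i₀ / xinf i₀ with ht_def
  have htpos : 0 < t := div_pos (hx i₀) (hxinf i₀)
  have hle : ∀ i, (t • xinf) i ≤ x_ θ i := by
    intro i
    have := hi₀ i (Finset.mem_univ i)
    have hxi := hxinf i
    simp only [Pi.smul_apply, smul_eq_mul]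
    rw [div_le_div_iff₀ (hxinf i₀) hxi] at this
    calc t * xinf i = x_ θ i₀ / xinf i₀ * xinf i := rfl
      _ ≤ x_ θ i := by
          rw [div_mul_eq_mul_div, div_le_iff₀ (hxinf i₀)]
          linarith
  have htnn : ∀ i, 0 ≤ (t • xinf) i := fun i => mul_nonneg htpos.le (hxinf i).le
  have key : laminf * (t * xinf i₀) ≤ (1 / c_ θ) * (t * xinf i₀) := by
    have h1 : Tinf (t • xinf) i₀ = t * (laminf * xinf i₀) := by
      rw [tinf_hom i₀ xinf (fun i => (hxinf i).le) t htpos, hasymfix]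
      rfl
    have h2 : Tinf (t • xinf) i₀ ≤ Tinf (x_ θ) i₀ := tinf_mono i₀ _ _ htnn hle
    have h3 : Tinf (x_ θ) i₀ ≤ T (x_ θ) i₀ := tinf_le i₀ _ hxnn
    have h4 : T (x_ θ) i₀ = (1 / c_ θ) * x_ θ i₀ := by rw [hfix θ hθ]; rfl
    have h5 : x_ θ i₀ = t * xinf i₀ := by
      rw [ht_def, div_mul_eq_mul_div, mul_div_assoc, div_self (hxinf i₀).ne', mul_one]
    calc laminf * (t * xinf i₀) = t * (laminf * xinf i₀) := by ring
      _ = Tinf (t • xinf) i₀ := h1.symm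
      _ ≤ T (x_ θ) i₀ := h2.trans h3
      _ = (1 / c_ θ) * (t * xinf i₀) := by rw [h4, h5]
  have hlamle : laminf ≤ 1 / c_ θ := by
    have hpos : 0 < t * xinf i₀ := mul_pos htpos (hxinf i₀)
    exact le_of_mul_le_mul_right (by linarith [key]) hpos
  have part2 : c_ θ / θ ≤ 1 / (laminf * θ) := by
    rw [div_le_div_iff₀ hθ (mul_pos hlaminf hθ)]
    have : c_ θ * laminf ≤ 1 := by
      rw [le_div_iff₀ hc] at hlamle
      linarith
    nlinarith
  exact le_min part1 part2
end
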